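/- Let σ be one of the semantics complete, grounded, preferred, stable, or semi-stable, and let S be a σ-stratified labeling of a finite abstract argumentation framework AF = (Ar, att). Then: (a) the set of finite values attained by S is either empty or equals {0, 1, …, k} for some k ∈ ℕ (an initial segment of ℕ); (b) for every finite value i attained by S, the subframework AF|{A ∈ Ar : S(A) ≥ i} admits a σ-labeling L_i with in(L_i) = {A ∈ Ar : S(A) = i}; and (c) the subframework AF|{A ∈ Ar : S(A) = ∞} admits a σ-labeling whose in-set is empty. -/

import Mathlib

/-- Labels for arguments: in, out, undecided. -/
inductive Lab : Type where
  | argIn | argOut | argUndec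
  deriving DecidableEq

/-- The set of arguments in `C` labeled `in` by `L`. -/
def inSet {α : Type*} (C : Set α) (L : α → Lab) : Set α := {a ∈ C | L a = Lab.argIn}

/-- The set of arguments in `C` labeled `undec` by `L`. -/
def undecSet {α : Type*} (C : Set α) (L : α → Lab) : Set α := {a ∈ C | L a = Lab.argUndec}

/-- `L` is a complete labeling of the subframework of `att` on the set `C` of arguments. -/
def IsCompleteLab {α : Type*} (att : α → α → Prop) (C : Set α) (L : α → Lab) : Prop :=
  (∀ a ∈ C, L a = Lab.argOut → ∃ b ∈ C, L b = Lab.argIn ∧ att b a) ∧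
  (∀ a ∈ C, L a = Lab.argIn → ∀ b ∈ C, att b a → L b = Lab.argOut) ∧
  (∀ a ∈ C, L a = Lab.argUndec →
    (∀ b ∈ C, att b a → L b ≠ Lab.argIn) ∧ (∃ b ∈ C, att b a ∧ L b ≠ Lab.argOut))

/-- The five semantics considered. -/
inductive Sem : Type where
  | complete | grounded | preferred | stable | semiStable

/-- `SemLab σ att C L` : `L` is a `σ`-labeling of the subframework of `att` on `C`. -/
def SemLab {α : Type*} : Sem → (α → α → Prop) → Set α → (α → Lab) → Prop
  | Sem.complete, att, C, L => IsCompleteLab att C L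
  | Sem.grounded, att, C, L => IsCompleteLab att C L ∧
      ∀ L', IsCompleteLab att C L' → inSet C L' ⊆ inSet C L → inSet C L ⊆ inSet C L'
  | Sem.preferred, att, C, L => IsCompleteLab att C L ∧
      ∀ L', IsCompleteLab att C L' → inSet C L ⊆ inSet C L' → inSet C L' ⊆ inSet C L
  | Sem.stable, att, C, L => IsCompleteLab att C L ∧ undecSet C L = ∅
  | Sem.semiStable, att, C, L => IsCompleteLab att C L ∧
      ∀ L', IsCompleteLab att C L' → undecSet C L' ⊆ undecSet C L → undecSet C L ⊆ undecSet C L'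

/-- `Stratified σ att C S` : `S` is a `σ`-stratified labeling of the subframework of `att`
on the set `C` of arguments (values of `S` outside `C` are irrelevant). -/
inductive Stratified {α : Type*} (σ : Sem) (att : α → α → Prop) : Set α → (α → ℕ∞) → Prop
  | ofEmpty {C : Set α} {S : α → ℕ∞} (L : α → Lab)
      (hL : SemLab σ att C L) (hin : inSet C L = ∅)
      (hS : ∀ a ∈ C, S a = ⊤) : Stratified σ att C S
  | ofStep {C : Set α} {S : α → ℕ∞} (L : α → Lab) (S' : α → ℕ∞)
      (hL : SemLab σ att C L) (hin : (inSet C L).Nonempty)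
      (hS' : Stratified σ att (C \ inSet C L) S')
      (h0 : ∀ a ∈ inSet C L, S a = 0)
      (h1 : ∀ a ∈ C \ inSet C L, S a = 1 + S' a) :
      Stratified σ att C S

lemma one_add_ne_zero' (x : ℕ∞) : 1 + x ≠ 0 := by
  intro h; rw [add_eq_zero] at h; simp at h

theorem strat_char {α : Type*} (att : α → α → Prop) (σ : Sem)
    {C : Set α} {S : α → ℕ∞} (hS : Stratified σ att C S) :
    ({n : ℕ | ∃ A ∈ C, S A = (n : ℕ∞)} = ∅ ∨
      ∃ k : ℕ, {n : ℕ | ∃ A ∈ C, S A = (n : ℕ∞)} = Set.Iic k) ∧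
    (∀ i : ℕ, (∃ A ∈ C, S A = (i : ℕ∞)) →
      ∃ L : α → Lab, SemLab σ att {A ∈ C | (i : ℕ∞) ≤ S A} L ∧
        inSet {A ∈ C | (i : ℕ∞) ≤ S A} L = {A ∈ C | S A = (i : ℕ∞)}) ∧
    (∃ L : α → Lab, SemLab σ att {A ∈ C | S A = ⊤} L ∧
      inSet {A ∈ C | S A = ⊤} L = ∅) := by
  induction hS with
  | ofEmpty L hL hin hS =>
    rename_i C S
    refine ⟨Or.inl ?_, ?_, ?_⟩
    · ext n
      simp only [Set.mem_setOf_eq, Set.mem_empty_iff_false, iff_false]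
      rintro ⟨A, hA, hSA⟩
      rw [hS A hA] at hSA
      exact (ENat.top_ne_coe n) hSA
    · rintro i ⟨A, hA, hSA⟩
      rw [hS A hA] at hSA
      exact absurd hSA (ENat.top_ne_coe i)
    · have e : {A ∈ C | S A = ⊤} = C := by
        ext a; simp only [Set.mem_setOf_eq, and_iff_left_iff_imp]
        exact fun ha => hS a ha
      rw [e]; exact ⟨L, hL, hin⟩
  | ofStep L S' hL hin hS' h0 h1 ih =>
    rename_i C S
    obtain ⟨ihA, ihB, ihC⟩ := ih
    set I := inSet C L with hI
    have hIC : I ⊆ C := fun a ha => ha.1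
    -- membership characterizations
    have memI : ∀ a ∈ C, (a ∈ I ↔ S a = 0) := by
      intro a ha
      constructor
      · exact fun h => h0 a h
      · intro h
        by_contra hn
        rw [h1 a ⟨ha, hn⟩] at h
        exact one_add_ne_zero' (S' a) h
    have memSucc : ∀ (j : ℕ) (a : α), (a ∈ C ∧ S a = ((j+1 : ℕ) : ℕ∞)) ↔
        (a ∈ C \ I ∧ S' a = (j : ℕ∞)) := by
      intro j a
      constructor
      · rintro ⟨ha, hSa⟩
        have hni : a ∉ I := by
          intro hi
          rw [h0 a hi] at hSa
          push_cast at hSa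
          rw [eq_comm, add_eq_zero] at hSa
          simp at hSa
        refine ⟨⟨ha, hni⟩, ?_⟩
        rw [h1 a ⟨ha, hni⟩] at hSa
        push_cast at hSa
        rw [add_comm (j:ℕ∞) 1] at hSa
        exact ENat.add_right_injective_of_ne_top ENat.one_ne_top hSa
      · rintro ⟨ha, hSa⟩
        refine ⟨ha.1, ?_⟩
        rw [h1 a ha, hSa]
        push_cast
        rw [add_comm]
    have memLeSucc : ∀ (j : ℕ) (a : α), (a ∈ C ∧ ((j+1 : ℕ) : ℕ∞) ≤ S a) ↔
        (a ∈ C \ I ∧ (j : ℕ∞) ≤ S' a) := by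
      intro j a
      constructor
      · rintro ⟨ha, hSa⟩
        have hni : a ∉ I := by
          intro hi
          rw [h0 a hi] at hSa
          simp at hSa
        refine ⟨⟨ha, hni⟩, ?_⟩
        rw [h1 a ⟨ha, hni⟩] at hSa
        push_cast at hSa
        rw [add_comm (j:ℕ∞) 1] at hSa
        exact (ENat.add_le_add_iff_left ENat.one_ne_top).mp hSa
      · rintro ⟨ha, hSa⟩
        refine ⟨ha.1, ?_⟩
        rw [h1 a ha]
        push_cast
        rw [add_comm 1 (S' a)]
        exact add_le_add_left hSa 1
    have memTop : ∀ a : α, (a ∈ C ∧ S a = ⊤) ↔ (a ∈ C \ I ∧ S' a = ⊤) := by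
      intro a
      constructor
      · rintro ⟨ha, hSa⟩
        have hni : a ∉ I := by
          intro hi; rw [h0 a hi] at hSa; simp at hSa
        refine ⟨⟨ha, hni⟩, ?_⟩
        rw [h1 a ⟨ha, hni⟩, ENat.add_eq_top] at hSa
        rcases hSa with h | h
        · simp at h
        · exact h
      · rintro ⟨ha, hSa⟩
        refine ⟨ha.1, ?_⟩
        rw [h1 a ha, hSa]; simp
    have h0mem : (0 : ℕ) ∈ {n : ℕ | ∃ A ∈ C, S A = (n : ℕ∞)} := by
      obtain ⟨a, ha⟩ := hin
      exact ⟨a, hIC ha, by simpa using h0 a ha⟩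
    have hsuccmem : ∀ n : ℕ, ((n+1 : ℕ) ∈ {n : ℕ | ∃ A ∈ C, S A = (n : ℕ∞)} ↔
        n ∈ {m : ℕ | ∃ A ∈ C \ I, S' A = (m : ℕ∞)}) := by
      intro n
      simp only [Set.mem_setOf_eq]
      constructor
      · rintro ⟨A, hA, hSA⟩
        obtain ⟨h1', h2'⟩ := (memSucc n A).mp ⟨hA, hSA⟩
        exact ⟨A, h1', h2'⟩
      · rintro ⟨A, hA, hSA⟩
        obtain ⟨h1', h2'⟩ := (memSucc n A).mpr ⟨hA, hSA⟩
        exact ⟨A, h1', h2'⟩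
    refine ⟨?_, ?_, ?_⟩
    · -- (a)
      right
      rcases ihA with hemp | ⟨k, hk⟩
      · refine ⟨0, ?_⟩
        ext n
        simp only [Set.mem_Iic, Nat.le_zero]
        cases n with
        | zero => simpa using h0mem
        | succ m =>
          rw [hsuccmem m, hemp]
          simp
      · refine ⟨k + 1, ?_⟩
        ext n
        simp only [Set.mem_Iic]
        cases n with
        | zero => simpa using h0mem
        | succ m =>
          rw [hsuccmem m, hk]
          simp [Nat.succ_le_succ_iff]
    · -- (b)
      intro i hi
      cases i with
      | zero =>
        have e1 : {A ∈ C | ((0:ℕ) : ℕ∞) ≤ S A} = C := by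
          ext a; simp
        have e2 : {A ∈ C | S A = ((0:ℕ) : ℕ∞)} = I := by
          ext a
          simp only [Set.mem_setOf_eq, Nat.cast_zero]
          constructor
          · rintro ⟨ha, hSa⟩; exact (memI a ha).mpr hSa
          · intro ha; exact ⟨hIC ha, (memI a (hIC ha)).mp ha⟩
        rw [e1, e2]
        exact ⟨L, hL, rfl⟩
      | succ j =>
        obtain ⟨A, hA, hSA⟩ := hi
        have hA' := (memSucc j A).mp ⟨hA, hSA⟩
        obtain ⟨L', hL', hin'⟩ := ihB j ⟨A, hA'.1, hA'.2⟩
        have e1 : {A ∈ C | ((j+1:ℕ) : ℕ∞) ≤ S A} = {A ∈ C \ I | (j : ℕ∞) ≤ S' A} := by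
          ext a; exact memLeSucc j a
        have e2 : {A ∈ C | S A = ((j+1:ℕ) : ℕ∞)} = {A ∈ C \ I | S' A = (j : ℕ∞)} := by
          ext a; exact memSucc j a
        rw [e1, e2]
        exact ⟨L', hL', hin'⟩
    · -- (c)
      have e : {A ∈ C | S A = ⊤} = {A ∈ C \ I | S' A = ⊤} := by
        ext a; exact memTop a
      rw [e]
      exact ihC


/-- Characterization of `σ`-stratified labelings:
(a) the set of finite values attained by `S` is empty or an initial segment `{0,…,k}` of ℕ;
(b) for every finite value `i` attained by `S`, the subframework on `{A | S A ≥ i}` admits a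
`σ`-labeling whose in-set equals `{A | S A = i}`;
(c) the subframework on `{A | S A = ∞}` admits a `σ`-labeling whose in-set is empty. -/
theorem stratified_characterization {α : Type*} [Fintype α] (att : α → α → Prop)
    (σ : Sem) (S : α → ℕ∞) (hS : Stratified σ att Set.univ S) :
    ({n : ℕ | ∃ A : α, S A = (n : ℕ∞)} = ∅ ∨
      ∃ k : ℕ, {n : ℕ | ∃ A : α, S A = (n : ℕ∞)} = Set.Iic k) ∧
    (∀ i : ℕ, (∃ A : α, S A = (i : ℕ∞)) →
      ∃ L : α → Lab, SemLab σ att {A : α | (i : ℕ∞) ≤ S A} L ∧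
        inSet {A : α | (i : ℕ∞) ≤ S A} L = {A : α | S A = (i : ℕ∞)}) ∧
    (∃ L : α → Lab, SemLab σ att {A : α | S A = ⊤} L ∧
      inSet {A : α | S A = ⊤} L = ∅) := by
  obtain ⟨ha, hb, hc⟩ := strat_char att σ hS
  have eu : ∀ (p : α → Prop), {A ∈ (Set.univ : Set α) | p A} = {A : α | p A} := by
    intro p; ext a; simp
  refine ⟨?_, ?_, ?_⟩
  · have : {n : ℕ | ∃ A ∈ (Set.univ : Set α), S A = (n : ℕ∞)} =
        {n : ℕ | ∃ A : α, S A = (n : ℕ∞)} := by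
      ext n; simp
    rw [this] at ha
    exact ha
  · intro i ⟨A, hA⟩
    obtain ⟨L, hL, hLe⟩ := hb i ⟨A, Set.mem_univ A, hA⟩
    rw [eu (fun A => (i : ℕ∞) ≤ S A)] at hL hLe
    rw [eu (fun A => S A = (i : ℕ∞))] at hLe
    exact ⟨L, hL, hLe⟩
  · obtain ⟨L, hL, hLe⟩ := hc
    rw [eu (fun A => S A = ⊤)] at hL hLe
    exact ⟨L, hL, hLe⟩
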